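/- In a game where each player's utility is linear in their own strategy, if s* is a Nash equilibrium that is variationally stable on a neighborhood S of s* (with equality in ⟨F(s), s − s*⟩ ≤ 0 only at s = s*), and s^{br} ≠ s* is another best response of some player i to s*_{-i} (i.e., ũ_i(s^{br}_i, s*_{-i}) = ũ_i(s*)), then the convex combination profile s_λ = λ s* + (1−λ)(s^{br}_i, s*_{-i}) satisfies ⟨F(s_λ), s_λ − s*⟩ = 0 for all λ ∈ [0,1]; hence for λ close to 1 (so s_λ ∈ S), strict variational stability fails unless s_λ = s*, yielding a contradiction. -/
import Mathlib


open scoped RealInnerProductSpace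

/-- In a game with utilities linear in the own strategy, suppose `s*` is a Nash
equilibrium that is variationally stable on a neighborhood `S` of `s*` (with equality
in `⟨F(s), s − s*⟩ ≤ 0` only at `s = s*`), and some player `i` has a best response
`s^br_i ≠ s*_i` to `s*_{-i}` with equal utility. Then every convex combination profile
`s_λ = λ s* + (1−λ)(s^br_i, s*_{-i})` satisfies `⟨F(s_λ), s_λ − s*⟩ = 0`; hence, since
`s_λ ∈ S` for `λ` close to 1 while `s_λ ≠ s*`, strict variational stability fails —
a contradiction. -/
theorem local_variational_stability_contradiction
    (n d : ℕ)
    (T : Fin n → Set (EuclideanSpace ℝ (Fin d)))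
    (c : Fin n → (Fin n → EuclideanSpace ℝ (Fin d)) → EuclideanSpace ℝ (Fin d))
    (hc : ∀ j s s', (∀ j', j' ≠ j → s j' = s' j') → c j s = c j s')
    (util : Fin n → (Fin n → EuclideanSpace ℝ (Fin d)) → ℝ)
    (hutil : ∀ j s, util j s = ⟪s j, c j s⟫)
    (sstar : Fin n → EuclideanSpace ℝ (Fin d)) (hmem : ∀ j, sstar j ∈ T j)
    (hnash : ∀ j, ∀ x ∈ T j, util j (Function.update sstar j x) ≤ util j sstar)
    (S : Set (Fin n → EuclideanSpace ℝ (Fin d))) (hS : S ∈ nhds sstar)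
    (hVS : ∀ s ∈ S, ∑ j, ⟪c j s, s j - sstar j⟫ ≤ 0 ∧
      (∑ j, ⟪c j s, s j - sstar j⟫ = 0 → s = sstar))
    (i : Fin n) (bri : EuclideanSpace ℝ (Fin d)) (hbri : bri ∈ T i)
    (hne : bri ≠ sstar i)
    (hbr : util i (Function.update sstar i bri) = util i sstar) :
    (∀ lam ∈ Set.Icc (0 : ℝ) 1,
      ∑ j, ⟪c j (Function.update sstar i (lam • sstar i + (1 - lam) • bri)),
            Function.update sstar i (lam • sstar i + (1 - lam) • bri) j - sstar j⟫
        = 0) ∧ False := by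
  -- c i is unaffected by changing coordinate i
  have hci : ∀ x, c i (Function.update sstar i x) = c i sstar := by
    intro x
    exact hc i _ sstar (fun j' hj' => Function.update_of_ne hj' x sstar)
  -- orthogonality from equal utility
  have hperp : ⟪c i sstar, bri - sstar i⟫ = 0 := by
    have h1 := hutil i (Function.update sstar i bri)
    have h2 := hutil i sstar
    rw [hbr, h2] at h1
    rw [Function.update_self, hci] at h1
    rw [real_inner_comm, inner_sub_left, h1, sub_self]
  -- the main sum computation
  have hsum : ∀ lam : ℝ,
      ∑ j, ⟪c j (Function.update sstar i (lam • sstar i + (1 - lam) • bri)),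
            Function.update sstar i (lam • sstar i + (1 - lam) • bri) j - sstar j⟫ = 0 := by
    intro lam
    set x := lam • sstar i + (1 - lam) • bri with hx
    rw [Finset.sum_eq_single i]
    · rw [Function.update_self, hci]
      have : x - sstar i = (1 - lam) • (bri - sstar i) := by
        rw [hx]; module
      rw [this, real_inner_smul_right, hperp, mul_zero]
    · intro j _ hj
      rw [Function.update_of_ne hj, sub_self, inner_zero_right]
    · intro h; exact absurd (Finset.mem_univ i) h
  refine ⟨fun lam _ => hsum lam, ?_⟩
  -- continuity argument: find lam < 1 with the profile in S
  have hf : Continuous fun lam : ℝ =>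
      Function.update sstar i (lam • sstar i + (1 - lam) • bri) := by
    apply continuous_pi
    intro j
    by_cases hj : j = i
    · subst hj
      simp only [Function.update_self]
      fun_prop
    · simp only [Function.update_of_ne hj]
      exact continuous_const
  have hf1 : Function.update sstar i ((1:ℝ) • sstar i + (1 - 1:ℝ) • bri) = sstar := by
    simp [Function.update_eq_self]
  have hpre : (fun lam : ℝ =>
      Function.update sstar i (lam • sstar i + (1 - lam) • bri)) ⁻¹' S ∈ nhds (1:ℝ) := by
    have := hf.continuousAt (x := (1:ℝ))
    apply this.preimage_mem_nhds
    rwa [hf1]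
  obtain ⟨ε, hε, hball⟩ := Metric.mem_nhds_iff.mp hpre
  set lam : ℝ := max 0 (1 - ε / 2) with hlam
  have hlamlt : lam < 1 := by
    apply max_lt one_pos
    linarith
  have hlammem : Function.update sstar i (lam • sstar i + (1 - lam) • bri) ∈ S := by
    apply hball
    rw [Metric.mem_ball, Real.dist_eq, abs_lt]
    constructor
    · have : 1 - ε / 2 ≤ lam := le_max_right _ _
      linarith
    · linarith
  have heq := (hVS _ hlammem).2 (hsum lam)
  have := congrFun heq i
  rw [Function.update_self] at this
  apply hne
  have h3 : (1 - lam) • (bri - sstar i) = 0 := by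
    have : lam • sstar i + (1 - lam) • bri - sstar i = 0 := by rw [this]; simp
    calc (1 - lam) • (bri - sstar i)
        = lam • sstar i + (1 - lam) • bri - sstar i := by module
      _ = 0 := this
  have h4 : bri - sstar i = 0 := by
    have hne1 : (1 - lam) ≠ 0 := by linarith
    exact (smul_eq_zero.mp h3).resolve_left hne1
  exact sub_eq_zero.mp h4
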